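/- Let D be a squarefree positive integer, K = ℚ(√−D) ⊂ ℂ (with √−D = i√D), 𝒪_K its ring of integers, and I a nonzero ideal of 𝒪_K. Then there exists a real number α > 0 such that the twist T_αΛ_K(I) is similar to the hexagonal lattice ℤ·(1, 0) + ℤ·(1/2, √3/2) if and only if I has a ℤ-basis {u, v} with Im(uv) ≠ 0 and F(u, v) = 0, where F(u, v) = (1/4)[(Im(u²) + Im(v²))² − (Im(uv))²]. -/

import Mathlib

open scoped RealInnerProductSpace

noncomputable section
set_option maxHeartbeats 2000000

/-- `ℝ²` with the Euclidean inner product and norm. -/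
abbrev E2 : Type := EuclideanSpace ℝ (Fin 2)

/-- The vector `(a, b) ∈ ℝ²`. -/
def v2 (a b : ℝ) : E2 := WithLp.toLp 2 ![a, b]

/-- The lattice `ℤx + ℤy`. -/
def latticeOf (x y : E2) : Set E2 := {z | ∃ m n : ℤ, z = m • x + n • y}

/-- `{x, y}` is a basis of the lattice `Λ`. -/
def IsBasisOf (x y : E2) (Λ : Set E2) : Prop :=
  LinearIndependent ℝ ![x, y] ∧ Λ = latticeOf x y

/-- `Λ` is a full-rank lattice of `ℝ²`. -/
def IsLattice (Λ : Set E2) : Prop := ∃ x y : E2, IsBasisOf x y Λ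

/-- `Λ₁ ∼ Λ₂`: there are `α > 0` and an orthogonal transformation `U` with `Λ₂ = αUΛ₁`. -/
def LatSimilar (Λ₁ Λ₂ : Set E2) : Prop :=
  ∃ α : ℝ, 0 < α ∧ ∃ U : (E2 ≃ₗᵢ[ℝ] E2), Λ₂ = (fun w => α • U w) '' Λ₁

/-- Cosine of the angle between `x` and `y`. -/
def cosAngle (x y : E2) : ℝ := ⟪x, y⟫ / (‖x‖ * ‖y‖)

/-- The twist map `T_α = diag(α, 1/α)`. -/
def Tmap (α : ℝ) : E2 → E2 := fun w => v2 (α * w 0) (w 1 / α)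


/-- `√-D = i·√D` as a complex number. -/
def sqrtnD (D : ℕ) : ℂ := Complex.I * Real.sqrt D

/-- `δ = (1+√-D)/2` if `-D ≡ 1 [ZMOD 4]` (i.e. `D % 4 = 3`), and `δ = √-D` otherwise. -/
def deltaK (D : ℕ) : ℂ := if D % 4 = 3 then (1 + sqrtnD D) / 2 else sqrtnD D

/-- The ring of integers `𝒪_K = ℤ[δ]` of `K = ℚ(√-D)`, as a subring of `ℂ`. -/
def OK (D : ℕ) : Subring ℂ := Subring.closure {deltaK D}

/-- The set of complex numbers belonging to the ideal `I ⊆ 𝒪_K`. -/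
def idealSet (D : ℕ) (I : Ideal (OK D)) : Set ℂ := (fun z : OK D => (z : ℂ)) '' I

/-- The embedding `ι : ℂ → ℝ², w ↦ (Re w, -Im w)`. -/
def iotaC (w : ℂ) : E2 := v2 w.re (-w.im)

/-- The planar lattice `Λ_K(I) = ι(I)` attached to the ideal `I`. -/
def LamK (D : ℕ) (I : Ideal (OK D)) : Set E2 := iotaC '' idealSet D I

/-- `{u, v}` is a `ℤ`-basis of the set `S ⊆ ℂ`, i.e. `S = ℤu + ℤv`. -/
def IsZBasisOf (S : Set ℂ) (u v : ℂ) : Prop := S = {z | ∃ m n : ℤ, z = m * u + n * v}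

/-- `F(u, v) = (1/4)[(Im(u²) + Im(v²))² - Im(uv)²]`. -/
def Fgood (u v : ℂ) : ℝ := (1 / 4) * (((u ^ 2).im + (v ^ 2).im) ^ 2 - ((u * v).im) ^ 2)

/-! ### Auxiliary material for the proof -/

section Aux

set_option maxHeartbeats 1000000

-- basic component lemmas
lemma v2_zero (a b : ℝ) : v2 a b 0 = a := rfl
lemma v2_one (a b : ℝ) : v2 a b 1 = b := rfl
lemma E2add_apply (X Y : E2) (i : Fin 2) : (X + Y) i = X i + Y i := rfl
lemma E2zsmul_apply (m : ℤ) (X : E2) (i : Fin 2) : (m • X) i = m * X i := by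
  show m • (X i) = _ ; rw [zsmul_eq_mul]
lemma E2rsmul_apply (t : ℝ) (X : E2) (i : Fin 2) : (t • X) i = t * X i := rfl
lemma E2sub_apply (X Y : E2) (i : Fin 2) : (X - Y) i = X i - Y i := rfl
lemma E2ext {X Y : E2} (h0 : X 0 = Y 0) (h1 : X 1 = Y 1) : X = Y := by
  apply PiLp.ext; intro i; fin_cases i <;> assumption

/-- The standard linear isometry between `ℂ` and `E2`. -/
def CE : ℂ ≃ₗᵢ[ℝ] E2 := Complex.isometryOfOrthonormal (EuclideanSpace.basisFun (Fin 2) ℝ)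

lemma CE_apply (z : ℂ) : CE z = v2 z.re z.im := by
  apply PiLp.ext; intro i
  fin_cases i <;>
    simp [CE, Complex.isometryOfOrthonormal_apply, v2, EuclideanSpace.basisFun_apply,
      EuclideanSpace.single_apply]

lemma inner_v2 (a b c d : ℝ) : ⟪v2 a b, v2 c d⟫ = a * c + b * d := by
  simp [v2, PiLp.inner_apply, Fin.sum_univ_two, RCLike.inner_apply]
  ring

/-- The unit complex number `conj x / |x|`. -/
def mycirc (x : ℂ) (hx : x ≠ 0) : Circle :=
  ⟨(starRingEnd ℂ) x / (‖x‖ : ℂ), by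
    apply mem_sphere_zero_iff_norm.2
    rw [norm_div]
    simp [Complex.norm_conj]
    exact hx⟩

lemma mycirc_coe (x : ℂ) (hx : x ≠ 0) :
    (mycirc x hx : ℂ) = (starRingEnd ℂ) x / (‖x‖ : ℂ) := rfl

/-- The twisted embedding `w ↦ (α Re w, -Im w / α)` as a real-linear map. -/
def TL (α : ℝ) : ℂ →ₗ[ℝ] E2 where
  toFun w := v2 (α * w.re) (-w.im / α)
  map_add' a b := by
    apply E2ext <;> simp [v2_zero, v2_one, E2add_apply] <;> ring
  map_smul' t a := by
    apply E2ext <;>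
      simp [v2_zero, v2_one, E2rsmul_apply, Complex.real_smul, Complex.mul_re,
        Complex.mul_im] <;> ring

lemma TL_eq (α : ℝ) (w : ℂ) : Tmap α (iotaC w) = TL α w := by
  apply E2ext <;> simp [Tmap, iotaC, v2_zero, v2_one, TL, neg_div]

lemma latticeOf_sub (e f : E2) : latticeOf e f = latticeOf e (e - f) := by
  ext z
  constructor
  · rintro ⟨m, n, rfl⟩
    exact ⟨m + n, -n, by simp [add_smul, neg_smul, smul_sub]⟩
  · rintro ⟨m, n, rfl⟩
    exact ⟨m + n, -n, by simp [add_smul, neg_smul, smul_sub]; abel⟩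

/-- The image of `ℤu + ℤv` under a map sending `mu+nv` to `m•e + n•f`. -/
lemma image_lattice (F : ℂ → E2) (u v : ℂ) (e f : E2)
    (hComp : ∀ m n : ℤ, F (↑m * u + ↑n * v) = m • e + n • f) :
    F '' {z : ℂ | ∃ m n : ℤ, z = ↑m * u + ↑n * v} = latticeOf e f := by
  ext z
  simp only [Set.mem_image, Set.mem_setOf_eq, latticeOf]
  constructor
  · rintro ⟨w, ⟨m, n, rfl⟩, rfl⟩
    exact ⟨m, n, hComp m n⟩
  · rintro ⟨m, n, rfl⟩
    exact ⟨↑m * u + ↑n * v, ⟨m, n, rfl⟩, hComp m n⟩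

/-- Solvability of the twist equations from the normalized invariant condition. -/
lemma exists_p (u v : ℂ)
    (him' : u.re * v.im + u.im * v.re ≠ 0)
    (hE' : 2 * (u.re * u.im) + 2 * (v.re * v.im) = u.re * v.im + u.im * v.re) :
    ∃ p ε : ℝ, 0 < p ∧ (ε = 1 ∨ ε = -1) ∧
      p * (2 * v.re - u.re) = ε * Real.sqrt 3 * u.im ∧
      ε * Real.sqrt 3 * p * u.re = u.im - 2 * v.im := by
  have h3 : (0:ℝ) < Real.sqrt 3 := Real.sqrt_pos.2 (by norm_num)
  have h3n : Real.sqrt 3 ≠ 0 := ne_of_gt h3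
  have hs3 : Real.sqrt 3 * Real.sqrt 3 = 3 := Real.mul_self_sqrt (by norm_num)
  by_cases hu2 : u.im = 0
  · have h1 : u.re * v.im ≠ 0 := by simpa [hu2] using him'
    have hure : u.re ≠ 0 := fun h => h1 (by rw [h]; ring)
    have hvim : v.im ≠ 0 := fun h => h1 (by rw [h]; ring)
    have h2 : 2 * v.re = u.re := by
      have h4 : v.im * (2 * v.re - u.re) = 0 := by
        rw [hu2] at hE'; nlinarith [hE']
      rcases mul_eq_zero.1 h4 with h | h
      · exact absurd h hvim
      · linarith
    set s : ℝ := -2 * v.im / (Real.sqrt 3 * u.re) with hsdef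
    have hs0 : s ≠ 0 := by
      apply div_ne_zero _ (mul_ne_zero h3n hure)
      intro h; apply hvim; linarith
    set ε : ℝ := if 0 < s then 1 else -1 with hεdef
    have hps : |s| = ε * s := by
      rw [hεdef]; split
      · rw [abs_of_pos ‹_›]; ring
      · rw [abs_of_nonpos (le_of_not_gt ‹_›)]; ring
    have hε2 : ε * ε = 1 := by rw [hεdef]; split <;> norm_num
    refine ⟨|s|, ε, abs_pos.2 hs0, by rw [hεdef]; split <;> simp, ?_, ?_⟩
    · rw [hu2, show 2 * v.re - u.re = 0 by linarith]
      ring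
    · rw [hps, hu2]
      field_simp [hsdef]
      rw [hsdef, pow_two, hε2]
      field_simp
      ring
  · have h21 : 2 * v.re - u.re ≠ 0 := by
      intro h
      have hvre : v.re = 0 := by
        have hure2 : u.re = 2 * v.re := by linarith
        have h5 : 3 * (u.im * v.re) = 0 := by
          rw [hure2] at hE'; linear_combination hE'
        have := mul_eq_zero.1 (by linarith : u.im * v.re = 0)
        rcases this with h' | h'
        · exact absurd h' hu2
        · exact h'
      apply him'
      rw [hvre, show u.re = 2 * v.re by linarith, hvre]; ring
    set s : ℝ := Real.sqrt 3 * u.im / (2 * v.re - u.re) with hsdef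
    have hs0 : s ≠ 0 := div_ne_zero (mul_ne_zero h3n hu2) h21
    set ε : ℝ := if 0 < s then 1 else -1 with hεdef
    have hps : |s| = ε * s := by
      rw [hεdef]; split
      · rw [abs_of_pos ‹_›]; ring
      · rw [abs_of_nonpos (le_of_not_gt ‹_›)]; ring
    have hε2 : ε * ε = 1 := by rw [hεdef]; split <;> norm_num
    refine ⟨|s|, ε, abs_pos.2 hs0, by rw [hεdef]; split <;> simp, ?_, ?_⟩
    · rw [hps, hsdef]
      field_simp
    · rw [hps, hsdef]
      field_simp
      linear_combination u.im * u.re * Real.sqrt 3 * Real.sqrt 3 * hε2 +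
        u.im * u.re * hs3 + 2 * hE'

/-- Complex-algebra core of the forward direction. -/
lemma hex_complex {x y : ℂ} {r : ℝ} (hr : 0 < r)
    (hx : Complex.normSq x = r) (hy : Complex.normSq y = r)
    (hxy : ((starRingEnd ℂ) x * y).re = r / 2) :
    x ^ 2 + y ^ 2 = x * y ∧ ((x * y).im = 0 → (x ^ 2).im ≠ 0) := by
  set q : ℂ := (starRingEnd ℂ) x * y with hqdef
  have hqn : Complex.normSq q = r * r := by
    rw [hqdef, map_mul, Complex.normSq_conj, hx, hy]
  have hqre : q.re = r / 2 := hxy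
  have hqapp := Complex.normSq_apply q
  have hqim : q.im ^ 2 = 3 * r ^ 2 / 4 := by nlinarith [hqn, hqre, hqapp]
  have hqim0 : q.im ≠ 0 := by
    intro h; rw [h] at hqim; nlinarith
  have hr0 : (r : ℂ) ≠ 0 := by
    simpa using ne_of_gt hr
  have hq2 : q ^ 2 = (r : ℂ) * q - (r : ℂ) * (r : ℂ) := by
    apply Complex.ext
    · simp [pow_two, Complex.mul_re, Complex.mul_im, Complex.sub_re,
        Complex.ofReal_re, Complex.ofReal_im]
      nlinarith [hqim, hqre]
    · simp [pow_two, Complex.mul_re, Complex.mul_im, Complex.sub_im,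
        Complex.ofReal_re, Complex.ofReal_im, hqre]
      ring
  have hry : (r : ℂ) * y = q * x := by
    have h1 : ((Complex.normSq x : ℝ) : ℂ) = x * (starRingEnd ℂ) x := (Complex.mul_conj x).symm
    rw [hx] at h1
    rw [hqdef]; rw [show (starRingEnd ℂ) x * y * x = (x * (starRingEnd ℂ) x) * y by ring, ← h1]
  have hmain : x ^ 2 + y ^ 2 = x * y := by
    have h1 : (r : ℂ) ^ 2 * (x ^ 2 + y ^ 2) = (r : ℂ) ^ 2 * (x * y) := by
      have h2 : ((r : ℂ) * y) ^ 2 = (q * x) ^ 2 := by rw [hry]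
      calc (r : ℂ) ^ 2 * (x ^ 2 + y ^ 2) = (r:ℂ)^2 * x^2 + ((r:ℂ)*y)^2 := by ring
        _ = (r:ℂ)^2 * x^2 + q^2 * x^2 := by rw [h2]; ring
        _ = (r:ℂ)^2 * x^2 + ((r:ℂ)*q - (r:ℂ)*(r:ℂ)) * x^2 := by rw [← hq2]
        _ = (r:ℂ) * x * (q * x) := by ring
        _ = (r:ℂ) * x * ((r:ℂ) * y) := by rw [← hry]
        _ = (r : ℂ) ^ 2 * (x * y) := by ring
    exact mul_left_cancel₀ (pow_ne_zero 2 hr0) h1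
  refine ⟨hmain, ?_⟩
  intro him h2im
  have hy2 : (y ^ 2).im = 0 := by
    have := congrArg Complex.im hmain
    simp only [Complex.add_im] at this
    rw [him, h2im] at this; linarith
  have hx2re : x ^ 2 = (((x ^ 2).re : ℝ) : ℂ) := Complex.ext (by simp) (by simp [h2im])
  have h4 : ((r : ℂ) * y) ^ 2 = (q * x) ^ 2 := by rw [hry]
  have h5 : (q ^ 2 * x ^ 2).im = 0 := by
    have : q ^ 2 * x ^ 2 = ((r:ℝ)^2 : ℂ) * y ^ 2 := by rw [← mul_pow, ← h4]; ring
    rw [this]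
    simp [Complex.mul_im, Complex.ofReal_im, hy2]
    left
    simp [pow_two, Complex.mul_im, Complex.ofReal_im]
  have h6 : (q ^ 2).im * (x ^ 2).re = 0 := by
    rw [hx2re] at h5
    simpa [Complex.mul_im] using h5
  have hq2im : (q ^ 2).im = r * q.im := by
    simp [pow_two, Complex.mul_im, hqre]; ring
  have hs : (x ^ 2).re = 0 := by
    rcases mul_eq_zero.1 h6 with h | h
    · rw [hq2im] at h
      rcases mul_eq_zero.1 h with h' | h'
      · exact absurd h' (ne_of_gt hr)
      · exact absurd h' hqim0
    · exact h
  have hx20 : x ^ 2 = 0 := by rw [hx2re, hs]; simp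
  have hx0 : x = 0 := pow_eq_zero_iff (by norm_num) |>.1 hx20
  rw [hx0] at hx; simp at hx; exact (ne_of_gt hr) hx.symm

/-- Key construction: a basis with normalized invariant yields a hexagonal twist. -/
lemma key (S : Set ℂ) (u v : ℂ)
    (hbasis : S = {z : ℂ | ∃ m n : ℤ, z = ↑m * u + ↑n * v})
    (him : (u * v).im ≠ 0)
    (hE : (u ^ 2).im + (v ^ 2).im = (u * v).im) :
    ∃ α : ℝ, 0 < α ∧
      LatSimilar (Tmap α '' (iotaC '' S)) (latticeOf (v2 1 0) (v2 (1 / 2) (Real.sqrt 3 / 2))) := by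
  have him' : u.re * v.im + u.im * v.re ≠ 0 := by
    intro h; apply him; simp [Complex.mul_im]; linarith
  have hE' : 2 * (u.re * u.im) + 2 * (v.re * v.im) = u.re * v.im + u.im * v.re := by
    simp [pow_two, Complex.mul_im] at hE; linarith
  obtain ⟨p, ε, hp, hεc, hA1, hA2⟩ := exists_p u v him' hE'
  obtain ⟨α, hα, hα2⟩ : ∃ α : ℝ, 0 < α ∧ α ^ 2 = p :=
    ⟨Real.sqrt p, Real.sqrt_pos.2 hp, Real.sq_sqrt (le_of_lt hp)⟩
  have hαn : α ≠ 0 := ne_of_gt hα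
  have hA1' : α ^ 2 * (2 * v.re - u.re) = ε * Real.sqrt 3 * u.im := by rw [hα2]; exact hA1
  have hA2' : ε * Real.sqrt 3 * α ^ 2 * u.re = u.im - 2 * v.im := by rw [hα2]; exact hA2
  set x : ℂ := (↑(α * u.re) + ↑(-u.im / α) * Complex.I : ℂ) with hxdef
  set y : ℂ := (↑(α * v.re) + ↑(-v.im / α) * Complex.I : ℂ) with hydef
  have hxre : x.re = α * u.re := by simp [hxdef]
  have hxim : x.im = -u.im / α := by simp [hxdef]
  have hyre : y.re = α * v.re := by simp [hydef]
  have hyim : y.im = -v.im / α := by simp [hydef]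
  set ω : ℂ := (↑(1 / 2 : ℝ) + ↑(ε * Real.sqrt 3 / 2) * Complex.I : ℂ) with hωdef
  have hωre : ω.re = 1 / 2 := by simp [hωdef]
  have hωim : ω.im = ε * Real.sqrt 3 / 2 := by simp [hωdef]
  have hyx : y = x * ω := by
    apply Complex.ext
    · rw [Complex.mul_re, hxre, hxim, hωre, hωim, hyre]
      field_simp
      linear_combination hA1'
    · rw [Complex.mul_im, hxre, hxim, hωre, hωim, hyim]
      field_simp
      linear_combination (-1) * hA2'
  have hx0 : x ≠ 0 := by
    intro h
    apply him'
    have h1 : x.re = 0 := by rw [h]; simp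
    have h2 : x.im = 0 := by rw [h]; simp
    rw [hxre] at h1; rw [hxim] at h2
    have hu1 : u.re = 0 := by
      rcases mul_eq_zero.1 h1 with h' | h'
      · exact absurd h' hαn
      · exact h'
    have hu2 : u.im = 0 := by field_simp at h2; linarith
    rw [hu1, hu2]; ring
  set c : Circle := mycirc x hx0 with hcdef
  set β : ℝ := ‖x‖⁻¹ with hβdef
  have hβ : 0 < β := inv_pos.2 (norm_pos_iff.mpr hx0)
  set U : E2 ≃ₗᵢ[ℝ] E2 := (CE.symm.trans (rotation c)).trans CE with hUdef
  have hUCE : ∀ z : ℂ, β • U (CE z) = CE (↑β * ((c : ℂ) * z)) := by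
    intro z
    rw [hUdef]
    simp only [LinearIsometryEquiv.trans_apply, LinearIsometryEquiv.symm_apply_apply,
      rotation_apply]
    rw [← CE.map_smul, Complex.real_smul]
  have habs : ‖x‖ ≠ 0 := norm_ne_zero_iff.mpr hx0
  have habsC : ((‖x‖ : ℝ) : ℂ) ≠ 0 := Complex.ofReal_ne_zero.2 habs
  have hcx : (↑β * ((c : ℂ) * x)) = 1 := by
    have h1 : (c : ℂ) * x = ((‖x‖ : ℝ) : ℂ) := by
      rw [hcdef, mycirc_coe, div_mul_eq_mul_div, mul_comm ((starRingEnd ℂ) x) x,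
        Complex.mul_conj, div_eq_iff habsC, Complex.normSq_eq_norm_sq]
      push_cast
      ring
    rw [h1, hβdef]
    norm_cast
    exact inv_mul_cancel₀ habs
  have hGu : β • U (TL α u) = v2 1 0 := by
    have hCEx : TL α u = CE x := by rw [CE_apply, hxre, hxim]; rfl
    rw [hCEx, hUCE, hcx, CE_apply]
    norm_num
  have hGv : β • U (TL α v) = v2 (1 / 2) (ε * Real.sqrt 3 / 2) := by
    have hCEy : TL α v = CE y := by rw [CE_apply, hyre, hyim]; rfl
    rw [hCEy, hUCE, hyx, show (↑β * ((c:ℂ) * (x * ω))) = (↑β * ((c:ℂ) * x)) * ω by ring, hcx,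
      one_mul, CE_apply, hωre, hωim]
  have hComp : ∀ m n : ℤ, β • U (Tmap α (iotaC (↑m * u + ↑n * v))) =
      m • (v2 1 0) + n • (v2 (1 / 2) (ε * Real.sqrt 3 / 2)) := by
    intro m n
    rw [TL_eq, show (↑m * u + ↑n * v : ℂ) = m • u + n • v by rw [zsmul_eq_mul, zsmul_eq_mul],
      map_add, map_zsmul, map_zsmul, map_add, map_zsmul, map_zsmul, smul_add,
      smul_comm β m, smul_comm β n, ← hGu, ← hGv]
  refine ⟨α, hα, β, hβ, U, ?_⟩
  have h1 : (fun w => β • U w) '' (Tmap α '' (iotaC '' S)) =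
      (fun w : ℂ => β • U (Tmap α (iotaC w))) '' S := by
    rw [Set.image_image, Set.image_image]
  rw [h1, hbasis, image_lattice _ u v _ _ hComp]
  rcases hεc with hε1 | hε1
  · rw [hε1, show (1:ℝ) * Real.sqrt 3 / 2 = Real.sqrt 3 / 2 by ring]
  · rw [hε1]
    have hv2 : v2 (1/2) (-1 * Real.sqrt 3 / 2) = v2 1 0 - v2 (1/2) (Real.sqrt 3 / 2) := by
      apply E2ext <;> simp [v2_zero, v2_one, E2sub_apply] <;> ring
    rw [hv2]
    exact latticeOf_sub _ _

end Aux

/-- The hexagonal lattice is a twist of `Λ_K(I)` iff `I` has a `ℤ`-basis `{u, v}` with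
`Im(uv) ≠ 0` and `F(u, v) = 0`. -/
theorem stmt_12 (D : ℕ) (hD : Squarefree D) (hD0 : 0 < D)
    (I : Ideal (OK D)) (hI : I ≠ ⊥) :
    (∃ α : ℝ, 0 < α ∧
        LatSimilar (Tmap α '' LamK D I)
          (latticeOf (v2 1 0) (v2 (1 / 2) (Real.sqrt 3 / 2)))) ↔
      ∃ u v : ℂ, IsZBasisOf (idealSet D I) u v ∧ (u * v).im ≠ 0 ∧ Fgood u v = 0 := by
  have hLam : LamK D I = iotaC '' (idealSet D I) := rfl
  constructor
  · -- forward direction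
    rintro ⟨α, hα, β, hβ, U, hU⟩
    have hαn : α ≠ 0 := ne_of_gt hα
    have hβn : β ≠ 0 := ne_of_gt hβ
    set F : ℂ → E2 := fun w => β • U (Tmap α (iotaC w)) with hFdef
    have hU' : latticeOf (v2 1 0) (v2 (1 / 2) (Real.sqrt 3 / 2)) = F '' (idealSet D I) := by
      rw [hU, hLam, Set.image_image, Set.image_image]
    have hFlin : ∀ (m n : ℤ) (a b : ℂ), F (↑m * a + ↑n * b) = m • F a + n • F b := by
      intro m n a b
      simp only [hFdef]
      rw [TL_eq, TL_eq, TL_eq,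
        show (↑m * a + ↑n * b : ℂ) = m • a + n • b by rw [zsmul_eq_mul, zsmul_eq_mul],
        map_add, map_zsmul, map_zsmul, map_add, map_zsmul, map_zsmul, smul_add,
        smul_comm β m, smul_comm β n]
    have hFinj : ∀ a b : ℂ, F a = F b → a = b := by
      intro a b h
      simp only [hFdef] at h
      have h2 : U (Tmap α (iotaC a)) = U (Tmap α (iotaC b)) :=
        smul_right_injective E2 hβn h
      have h3 := U.injective h2
      rw [TL_eq, TL_eq] at h3
      have h40 := congrArg (fun X : E2 => X 0) h3
      have h41 := congrArg (fun X : E2 => X 1) h3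
      simp only [TL, LinearMap.coe_mk, AddHom.coe_mk, v2_zero, v2_one] at h40 h41
      apply Complex.ext
      · exact mul_left_cancel₀ hαn h40
      · field_simp at h41
        linarith
    have he_mem : v2 1 0 ∈ latticeOf (v2 1 0) (v2 (1 / 2) (Real.sqrt 3 / 2)) :=
      ⟨1, 0, by simp⟩
    have hf_mem : v2 (1 / 2) (Real.sqrt 3 / 2) ∈
        latticeOf (v2 1 0) (v2 (1 / 2) (Real.sqrt 3 / 2)) := ⟨0, 1, by simp⟩
    rw [hU'] at he_mem hf_mem
    obtain ⟨u, hu_mem, hFu⟩ := he_mem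
    obtain ⟨v, hv_mem, hFv⟩ := hf_mem
    have hbasis : idealSet D I = {z : ℂ | ∃ m n : ℤ, z = ↑m * u + ↑n * v} := by
      ext z
      constructor
      · intro hz
        have hzin : F z ∈ latticeOf (v2 1 0) (v2 (1 / 2) (Real.sqrt 3 / 2)) := by
          rw [hU']; exact ⟨z, hz, rfl⟩
        obtain ⟨m, n, hmn⟩ := hzin
        refine ⟨m, n, hFinj _ _ ?_⟩
        rw [hFlin m n u v, hFu, hFv]
        exact hmn
      · rintro ⟨m, n, rfl⟩
        have hin : F (↑m * u + ↑n * v) ∈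
            latticeOf (v2 1 0) (v2 (1 / 2) (Real.sqrt 3 / 2)) := by
          rw [hFlin m n u v, hFu, hFv]; exact ⟨m, n, rfl⟩
        rw [hU'] at hin
        obtain ⟨w, hw, hFw⟩ := hin
        rwa [hFinj _ _ hFw] at hw
    -- Gram relations
    have hs3 : Real.sqrt 3 * Real.sqrt 3 = 3 := Real.mul_self_sqrt (by norm_num)
    have hGram : ∀ (X Y eX eY : E2), β • U X = eX → β • U Y = eY →
        ⟪eX, eY⟫ = β ^ 2 * ⟪X, Y⟫ := by
      intro X Y eX eY hX hY
      rw [← hX, ← hY, real_inner_smul_left, real_inner_smul_right, U.inner_map_map]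
      ring
    have hXv : Tmap α (iotaC u) = v2 (α * u.re) (-u.im / α) := by rw [TL_eq]; rfl
    have hYv : Tmap α (iotaC v) = v2 (α * v.re) (-v.im / α) := by rw [TL_eq]; rfl
    have hFu' : β • U (Tmap α (iotaC u)) = v2 1 0 := hFu
    have hFv' : β • U (Tmap α (iotaC v)) = v2 (1 / 2) (Real.sqrt 3 / 2) := hFv
    have g1 : (1 : ℝ) = β ^ 2 * ((α * u.re) * (α * u.re) + (-u.im / α) * (-u.im / α)) := by
      have := hGram _ _ _ _ hFu' hFu'
      rw [hXv, inner_v2, inner_v2] at this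
      linarith [this]
    have g2 : (1 : ℝ) = β ^ 2 * ((α * v.re) * (α * v.re) + (-v.im / α) * (-v.im / α)) := by
      have := hGram _ _ _ _ hFv' hFv'
      rw [hYv, inner_v2, inner_v2] at this
      linarith [this, hs3]
    have g3 : (1 : ℝ) / 2 = β ^ 2 *
        ((α * u.re) * (α * v.re) + (-u.im / α) * (-v.im / α)) := by
      have := hGram _ _ _ _ hFu' hFv'
      rw [hXv, hYv, inner_v2, inner_v2] at this
      linarith [this]
    set r : ℝ := (β ^ 2)⁻¹ with hrdef
    have hβ2 : (0:ℝ) < β ^ 2 := by positivity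
    have hr : 0 < r := inv_pos.2 hβ2
    set x : ℂ := (↑(α * u.re) + ↑(-u.im / α) * Complex.I : ℂ) with hxdef
    set y : ℂ := (↑(α * v.re) + ↑(-v.im / α) * Complex.I : ℂ) with hydef
    have hxre : x.re = α * u.re := by simp [hxdef]
    have hxim : x.im = -u.im / α := by simp [hxdef]
    have hyre : y.re = α * v.re := by simp [hydef]
    have hyim : y.im = -v.im / α := by simp [hydef]
    have hnx : Complex.normSq x = r := by
      rw [hxdef, Complex.normSq_add_mul_I, hrdef]
      field_simp
      field_simp at g1
      linarith [g1]
    have hny : Complex.normSq y = r := by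
      rw [hydef, Complex.normSq_add_mul_I, hrdef]
      field_simp
      field_simp at g2
      linarith [g2]
    have hq : ((starRingEnd ℂ) x * y).re = r / 2 := by
      rw [Complex.mul_re, Complex.conj_re, Complex.conj_im, hxre, hxim, hyre, hyim, hrdef]
      field_simp
      field_simp at g3
      linarith [g3]
    obtain ⟨hmain, hbad⟩ := hex_complex hr hnx hny hq
    -- translate back to u, v
    have e1 : (x * x).im = -((u * u).im) := by
      rw [Complex.mul_im, Complex.mul_im, hxre, hxim]
      field_simp
      ring
    have e2 : (y * y).im = -((v * v).im) := by
      rw [Complex.mul_im, Complex.mul_im, hyre, hyim]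
      field_simp
      ring
    have e3 : (x * y).im = -((u * v).im) := by
      rw [Complex.mul_im, Complex.mul_im, hxre, hxim, hyre, hyim]
      field_simp
      ring
    have hS : (u ^ 2).im + (v ^ 2).im = (u * v).im := by
      have h := congrArg Complex.im hmain
      simp only [Complex.add_im, pow_two] at h ⊢
      rw [e1, e2, e3] at h
      linarith
    by_cases him : (u * v).im = 0
    · -- degenerate pulled-back basis: use (u, u+v) instead
      have hxy0 : (x * y).im = 0 := by rw [e3, him]; ring
      have hx2 : (x ^ 2).im ≠ 0 := hbad hxy0
      have hu2 : (u ^ 2).im ≠ 0 := by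
        intro h
        apply hx2
        rw [pow_two, e1, pow_two] at *
        rw [h]; ring
      refine ⟨u, u + v, ?_, ?_, ?_⟩
      · show idealSet D I = _
        rw [hbasis]
        ext z
        constructor
        · rintro ⟨m, n, rfl⟩
          exact ⟨m - n, n, by push_cast; ring⟩
        · rintro ⟨m, n, rfl⟩
          exact ⟨m + n, n, by push_cast; ring⟩
      · rw [show u * (u + v) = u ^ 2 + u * v by ring, Complex.add_im, him, add_zero]
        exact hu2
      · have h5 : ((u + v) ^ 2).im = 0 := by
          rw [show ((u + v) ^ 2 : ℂ) = u ^ 2 + 2 * (u * v) + v ^ 2 by ring]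
          simp only [Complex.add_im]
          have : ((2 : ℂ) * (u * v)).im = 2 * (u * v).im := by
            simp [Complex.mul_im]
          rw [this, him]
          linarith [hS, him]
        have h6 : (u * (u + v)).im = (u ^ 2).im := by
          rw [show u * (u + v) = u ^ 2 + u * v by ring, Complex.add_im, him, add_zero]
        rw [Fgood, h5, h6]
        ring
    · refine ⟨u, v, hbasis, him, ?_⟩
      rw [Fgood, hS]
      ring
  · -- backward direction
    rintro ⟨u, v, hbasis, him, hF⟩
    have hbasis' : idealSet D I = {z : ℂ | ∃ m n : ℤ, z = ↑m * u + ↑n * v} := hbasis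
    have h2 : ((u ^ 2).im + (v ^ 2).im) ^ 2 = ((u * v).im) ^ 2 := by
      rw [Fgood] at hF; linarith
    have h3 : (((u ^ 2).im + (v ^ 2).im) - (u * v).im) *
        (((u ^ 2).im + (v ^ 2).im) + (u * v).im) = 0 := by
      linear_combination h2
    rcases mul_eq_zero.1 h3 with h4 | h4
    · obtain ⟨α, hα, hSim⟩ := key (idealSet D I) u v hbasis' him (by linarith)
      refine ⟨α, hα, ?_⟩
      rw [hLam]
      exact hSim
    · have hbasis'' : idealSet D I = {z : ℂ | ∃ m n : ℤ, z = ↑m * u + ↑n * (-v)} := by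
        rw [hbasis']
        ext z
        constructor
        · rintro ⟨m, n, rfl⟩
          exact ⟨m, -n, by push_cast; ring⟩
        · rintro ⟨m, n, rfl⟩
          exact ⟨m, -n, by push_cast; ring⟩
      have him' : (u * (-v)).im ≠ 0 := by
        rw [show u * (-v) = -(u * v) by ring, Complex.neg_im]
        intro h
        exact him (by linarith)
      have hE2 : (u ^ 2).im + ((-v) ^ 2).im = (u * (-v)).im := by
        rw [show ((-v) ^ 2 : ℂ) = v ^ 2 by ring,
          show u * (-v) = -(u * v) by ring, Complex.neg_im]
        linarith
      obtain ⟨α, hα, hSim⟩ := key (idealSet D I) u (-v) hbasis'' him' hE2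
      refine ⟨α, hα, ?_⟩
      rw [hLam]
      exact hSim
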